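/- Assume q is odd and Λ > q. Let r = 1/(2q) − 1/(2Λ) and c_m = (m + 1/2)/q for integers m with 0 ≤ m < (q+1)/2. Then: (i) p vanishes identically on [c_m − r, c_m + r] ∩ [0,1/2] for each such m; (ii) every nonempty open interval J ⊆ (0,1/2) on which p is constant is contained in some [c_m − r, c_m + r], and the constant value of p on J is 0. -/

import Mathlib

noncomputable def e (x : ℝ) : ℂ := Complex.exp (2 * Real.pi * Complex.I * x)

noncomputable def G (a k : ℤ) (q : ℕ) : ℂ :=
  ∑ ℓ ∈ Finset.range q, e (((a * ℓ ^ 2 + k * ℓ : ℤ) : ℝ) / q)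

noncomputable def invMod (a : ℤ) (q : ℕ) : ℕ := ZMod.val ((a : ZMod q)⁻¹)

noncomputable def cc (a : ℤ) (q : ℕ) (k : ℤ) : ℂ :=
  if Odd q then e ((invMod (4 * a) q : ℝ) * (k : ℝ) ^ 2 / q)
  else if Even (k + (q : ℤ) / 2) then
    (Real.sqrt 2 : ℂ) * e ((invMod a q : ℝ) * (k : ℝ) ^ 2 / (4 * q))
  else 0

noncomputable def Iset (Λ : ℝ) (q : ℕ) (x : ℝ) : Finset ℤ :=
  Finset.Icc ⌈x * q - q / (2 * Λ)⌉ ⌊x * q + q / (2 * Λ)⌋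

noncomputable def pden (N q : ℕ) (Λ : ℝ) (a : ℤ) (x : ℝ) : ℝ :=
  (4 * Λ / q) * ‖∑ k ∈ Iset Λ q x,
    cc a q k * (Real.sin (2 * Real.pi * N * Λ * (x - k / q)) : ℂ)‖ ^ 2

noncomputable def Splus (N q : ℕ) (Λ : ℝ) (a : ℤ) (x : ℝ) : ℂ :=
  ∑ k ∈ Iset Λ q x, cc a q k * e (N * Λ * k / q)

noncomputable def Sminus (N q : ℕ) (Λ : ℝ) (a : ℤ) (x : ℝ) : ℂ :=
  ∑ k ∈ Iset Λ q x, cc a q k * e (-(N * Λ * k / q))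

def Nonsingular (Λ : ℝ) (q : ℕ) (x : ℝ) : Prop :=
  (Odd q → ∀ n : ℤ, x * q - q / (2 * Λ) ≠ n ∧ x * q + q / (2 * Λ) ≠ n) ∧
  (Even q → ∀ n : ℤ, Even n →
    x * q - q / (2 * Λ) + q / 2 ≠ n ∧ x * q + q / (2 * Λ) + q / 2 ≠ n)

noncomputable def Dnear (x : ℝ) : ℝ := |x - round x|

lemma abs_e (t : ℝ) : ‖e t‖ = 1 := by simp [e, Complex.norm_exp]

lemma abs_cc_odd (a : ℤ) (q : ℕ) (k : ℤ) (hodd : Odd q) : ‖cc a q k‖ = 1 := by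
  rw [cc, if_pos hodd]; exact abs_e _

lemma mem_Iset (Λ : ℝ) (q : ℕ) (x : ℝ) (k : ℤ) :
    k ∈ Iset Λ q x ↔ x * q - q / (2 * Λ) ≤ k ∧ (k : ℝ) ≤ x * q + q / (2 * Λ) := by
  rw [Iset, Finset.mem_Icc, Int.ceil_le, Int.le_floor]

lemma vanish (N q : ℕ) (Λ : ℝ) (a : ℤ) (hΛ : 0 < Λ) (hq : 0 < q) (m : ℤ) (x : ℝ)
    (hx1 : (m : ℝ) + q / (2 * Λ) ≤ x * q) (hx2 : x * q ≤ (m : ℝ) + 1 - q / (2 * Λ)) :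
    pden N q Λ a x = 0 := by
  have hq0 : (0:ℝ) < q := by exact_mod_cast hq
  have hzero : ∀ k ∈ Iset Λ q x, cc a q k * (Real.sin (2 * Real.pi * N * Λ * (x - k / q)) : ℂ) = 0 := by
    intro k hk
    rw [mem_Iset] at hk
    have hk1 : (m:ℝ) ≤ k := by linarith [hk.2]
    have hk2 : (k:ℝ) ≤ m + 1 := by linarith [hk.1]
    have hkm : k = m ∨ k = m + 1 := by
      have h1 : m ≤ k := by exact_mod_cast hk1
      have h2 : k ≤ m + 1 := by exact_mod_cast hk2
      omega
    have hsin : Real.sin (2 * Real.pi * N * Λ * (x - k / q)) = 0 := by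
      rcases hkm with rfl | rfl
      · have hxq : x * q = (k:ℝ) + q / (2 * Λ) := by linarith [hk.1]
        have harg : 2 * Real.pi * N * Λ * (x - k / q) = N * Real.pi := by
          have hx' : x - (k:ℝ) / q = 1 / (2 * Λ) := by
            field_simp at hxq ⊢; linarith
          rw [hx']; field_simp
        rw [harg, Real.sin_nat_mul_pi]
      · push_cast at hk
        have hxq : x * q = ((m:ℝ) + 1) - q / (2 * Λ) := by linarith [hk.2]
        have harg : 2 * Real.pi * N * Λ * (x - ((m:ℤ)+1 : ℤ) / q) = -(N * Real.pi) := by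
          have hx' : x - ((m:ℝ) + 1) / q = -(1 / (2 * Λ)) := by
            field_simp at hxq ⊢; linarith
          push_cast
          rw [hx']; field_simp
        rw [harg, Real.sin_neg, Real.sin_nat_mul_pi, neg_zero]
    rw [hsin]; simp
  rw [pden, Finset.sum_eq_zero hzero]
  simp

lemma Iset_singleton (Λ : ℝ) (q : ℕ) (x : ℝ) (k : ℤ) (hΛ : 0 < Λ) (hq : 0 < q)
    (hfrag : (q:ℝ) < Λ) (hk : |x * q - k| < q / (2 * Λ)) : Iset Λ q x = {k} := by
  have hq0 : (0:ℝ) < q := by exact_mod_cast hq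
  have hh : q / (2 * Λ) < 1 / 2 := by
    rw [div_lt_div_iff₀ (by positivity) (by norm_num)]; linarith
  have h1 : x * q - q / (2 * Λ) ≤ k := by
    cases abs_lt.mp hk with
    | intro hl hr => linarith
  have h2 : (k:ℝ) ≤ x * q + q / (2 * Λ) := by
    cases abs_lt.mp hk with
    | intro hl hr => linarith
  have hc : ⌈x * q - q / (2 * Λ)⌉ = k := by
    rw [Int.ceil_eq_iff]
    constructor
    · cases abs_lt.mp hk with
      | intro hl hr =>
        have h3 : 0 < q / (2 * Λ) := by positivity
        linarith
    · exact h1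
  have hf : ⌊x * q + q / (2 * Λ)⌋ = k := by
    rw [Int.floor_eq_iff]
    constructor
    · exact h2
    · cases abs_lt.mp hk with
      | intro hl hr => linarith
  rw [Iset, hc, hf, Finset.Icc_self]

lemma sin_sq_not_const (ω φ c α β : ℝ) (hαβ : α < β) (hω : 0 < ω)
    (h : ∀ x ∈ Set.Ioo α β, Real.sin (ω * x + φ) ^ 2 = c) : False := by
  have hzero : ∀ x ∈ Set.Ioo α β, Real.sin (ω * x + φ) = 0 ∨ Real.cos (ω * x + φ) = 0 := by
    intro x hx
    set f : ℝ → ℝ := fun y => Real.sin (ω * y + φ) ^ 2 with hf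
    have hlin : HasDerivAt (fun y => ω * y + φ) (ω * 1) x :=
      ((hasDerivAt_id x).const_mul ω).add_const φ
    have hd : HasDerivAt f (2 * Real.sin (ω * x + φ) ^ 1 * (Real.cos (ω * x + φ) * (ω * 1))) x :=
      by
        have := ((Real.hasDerivAt_sin (ω * x + φ)).comp x hlin).pow 2
        refine this.congr_deriv ?_; norm_num
    have heq : f =ᶠ[nhds x] fun _ => c :=
      Filter.eventuallyEq_of_mem (Ioo_mem_nhds hx.1 hx.2) h
    have h0 : deriv f x = 0 := by rw [heq.deriv_eq]; exact deriv_const x c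
    have h1 := hd.deriv
    rw [h0] at h1
    have h2 : Real.sin (ω * x + φ) * Real.cos (ω * x + φ) * ω = 0 := by
      rw [pow_one] at h1; nlinarith [h1]
    rcases mul_eq_zero.mp h2 with h3 | h3
    · exact mul_eq_zero.mp h3
    · exact absurd h3 hω.ne'
  have hsin2 : ∀ x ∈ Set.Ioo α β, Real.sin (2 * (ω * x + φ)) = 0 := by
    intro x hx
    rw [Real.sin_two_mul]
    rcases hzero x hx with h3 | h3 <;> rw [h3] <;> ring
  have hπ := Real.pi_pos
  set x1 := (α + β) / 2 with hx1
  set d := min ((β - α) / 4) (Real.pi / (4 * ω)) with hd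
  have hd0 : 0 < d := lt_min (by linarith) (by positivity)
  set x2 := x1 + d with hx2
  have hx1m : x1 ∈ Set.Ioo α β := ⟨by simp only [hx1]; linarith, by simp only [hx1]; linarith⟩
  have hx2m : x2 ∈ Set.Ioo α β := by
    constructor
    · simp only [hx2, hx1]; linarith
    · have : d ≤ (β - α) / 4 := min_le_left _ _
      simp only [hx2, hx1]; linarith
  obtain ⟨n1, hn1⟩ := Real.sin_eq_zero_iff.mp (hsin2 x1 hx1m)
  obtain ⟨n2, hn2⟩ := Real.sin_eq_zero_iff.mp (hsin2 x2 hx2m)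
  have hdiff : (n2 : ℝ) * Real.pi - (n1 : ℝ) * Real.pi = 2 * ω * d := by
    have hx2' : x2 = x1 + d := rfl
    rw [hn1, hn2, hx2']; ring
  have hdle : 2 * ω * d ≤ Real.pi / 2 := by
    have h4 : d ≤ Real.pi / (4 * ω) := min_le_right _ _
    calc 2 * ω * d ≤ 2 * ω * (Real.pi / (4 * ω)) := by nlinarith
      _ = Real.pi / 2 := by field_simp; ring
  have hdpos : 0 < 2 * ω * d := by positivity
  have h01 : (0 : ℝ) < ((n2 - n1 : ℤ) : ℝ) := by
    push_cast; nlinarith [hdiff, hdpos]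
  have h02 : ((n2 - n1 : ℤ) : ℝ) < 1 := by
    push_cast; nlinarith [hdiff, hdle, hπ]
  have hA : (0:ℤ) < n2 - n1 := by exact_mod_cast h01
  have hB : (n2 - n1 : ℤ) < 1 := by exact_mod_cast h02
  omega


theorem stmt7 (Λ : ℝ) (hΛ : 1 < Λ) (N : ℕ) (hN : 0 < N) (a : ℤ) (q : ℕ)
    (hq : 0 < q) (hcop : Int.gcd a q = 1) (hodd : Odd q) (hfrag : (q : ℝ) < Λ) :
    (∀ m : ℤ, 0 ≤ m → (m : ℝ) < (q + 1) / 2 →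
      ∀ x ∈ Set.Icc (((m : ℝ) + 1 / 2) / q - (1 / (2 * q) - 1 / (2 * Λ)))
          (((m : ℝ) + 1 / 2) / q + (1 / (2 * q) - 1 / (2 * Λ))) ∩ Set.Icc (0 : ℝ) (1 / 2),
        pden N q Λ a x = 0) ∧
    (∀ l u : ℝ, l < u → Set.Ioo l u ⊆ Set.Ioo (0 : ℝ) (1 / 2) →
      (∃ v : ℝ, ∀ x ∈ Set.Ioo l u, pden N q Λ a x = v) →
      (∃ m : ℤ, 0 ≤ m ∧ (m : ℝ) < (q + 1) / 2 ∧
        Set.Ioo l u ⊆ Set.Icc (((m : ℝ) + 1 / 2) / q - (1 / (2 * q) - 1 / (2 * Λ)))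
          (((m : ℝ) + 1 / 2) / q + (1 / (2 * q) - 1 / (2 * Λ)))) ∧
      ∀ x ∈ Set.Ioo l u, pden N q Λ a x = 0) := by
  have hΛ0 : (0:ℝ) < Λ := by linarith
  have hq0 : (0:ℝ) < q := by exact_mod_cast hq
  have hh0 : (0:ℝ) < q / (2 * Λ) := by positivity
  have heqlo : ∀ m : ℤ, ((m : ℝ) + 1 / 2) / q - (1 / (2 * q) - 1 / (2 * Λ))
      = ((m : ℝ) + q / (2 * Λ)) / q := by
    intro m; field_simp; ring
  have heqhi : ∀ m : ℤ, ((m : ℝ) + 1 / 2) / q + (1 / (2 * q) - 1 / (2 * Λ))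
      = ((m : ℝ) + 1 - q / (2 * Λ)) / q := by
    intro m; field_simp; ring
  have part1 : ∀ m : ℤ, 0 ≤ m → (m : ℝ) < (q + 1) / 2 →
      ∀ x ∈ Set.Icc (((m : ℝ) + 1 / 2) / q - (1 / (2 * q) - 1 / (2 * Λ)))
          (((m : ℝ) + 1 / 2) / q + (1 / (2 * q) - 1 / (2 * Λ))) ∩ Set.Icc (0 : ℝ) (1 / 2),
        pden N q Λ a x = 0 := by
    intro m _ _ x hx
    obtain ⟨⟨hxl, hxr⟩, -⟩ := hx
    rw [heqlo m] at hxl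
    rw [heqhi m] at hxr
    exact vanish N q Λ a hΛ0 hq m x ((div_le_iff₀ hq0).mp hxl) ((le_div_iff₀ hq0).mp hxr)
  refine ⟨part1, ?_⟩
  rintro l u hlu hsub ⟨v, hv⟩
  have hNΛ : (0:ℝ) < 2 * Real.pi * N * Λ := by
    have : (0:ℝ) < N := by exact_mod_cast hN
    have := Real.pi_pos
    positivity
  -- no x in (l,u) is strictly within q/(2Λ) of an integer (after scaling by q)
  have hfar : ∀ x ∈ Set.Ioo l u, ∀ k : ℤ, (q:ℝ) / (2 * Λ) ≤ |x * q - k| := by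
    intro x hx k
    by_contra hcon
    push_neg at hcon
    have hεnum : (0:ℝ) < q / (2 * Λ) - |x * q - k| := by linarith
    set ε := ((q:ℝ) / (2 * Λ) - |x * q - k|) / q with hε
    have hε0 : 0 < ε := by positivity
    set α := max l (x - ε) with hα
    set β := min u (x + ε) with hβ
    have hαx : α < x := max_lt hx.1 (by linarith)
    have hxβ : x < β := lt_min hx.2 (by linarith)
    have hαβ : α < β := hαx.trans hxβ
    have hsubI : ∀ y ∈ Set.Ioo α β, y ∈ Set.Ioo l u ∧ |y * q - k| < q / (2 * Λ) := by
      intro y hy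
      have hy1 : l < y := lt_of_le_of_lt (le_max_left _ _) hy.1
      have hy2 : y < u := lt_of_lt_of_le hy.2 (min_le_left _ _)
      have hyx : |y - x| < ε := by
        rw [abs_lt]
        constructor
        · have := lt_of_le_of_lt (le_max_right _ _) hy.1; linarith
        · have := lt_of_lt_of_le hy.2 (min_le_right _ _); linarith
      refine ⟨⟨hy1, hy2⟩, ?_⟩
      have key : |y * q - k| ≤ |x * q - k| + |y - x| * q := by
        have : y * q - k = (x * q - k) + (y - x) * q := by ring
        rw [this]
        calc |(x * q - k) + (y - x) * q| ≤ |x * q - k| + |(y - x) * q| := abs_add_le _ _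
          _ = |x * q - k| + |y - x| * q := by rw [abs_mul, abs_of_pos hq0]
      have : |y - x| * q < ε * q := by nlinarith
      have hεq : ε * q = q / (2 * Λ) - |x * q - k| := by
        rw [hε]; field_simp
      linarith
    have hc : ∀ y ∈ Set.Ioo α β,
        Real.sin (2 * Real.pi * N * Λ * y + -(2 * Real.pi * N * Λ * k / q)) ^ 2
          = v * q / (4 * Λ) := by
      intro y hy
      obtain ⟨hyU, hyK⟩ := hsubI y hy
      have hIs := Iset_singleton Λ q y k hΛ0 hq hfrag hyK
      have hp := hv y hyU
      rw [pden, hIs, Finset.sum_singleton, norm_mul, abs_cc_odd a q k hodd, one_mul,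
        Complex.norm_real, Real.norm_eq_abs, sq_abs] at hp
      have harg : 2 * Real.pi * N * Λ * (y - k / q)
          = 2 * Real.pi * N * Λ * y + -(2 * Real.pi * N * Λ * k / q) := by ring
      rw [harg] at hp
      set s := Real.sin (2 * Real.pi * N * Λ * y + -(2 * Real.pi * N * Λ * k / q)) with hs
      rw [eq_div_iff (by positivity : (4:ℝ) * Λ ≠ 0)]
      field_simp at hp
      linarith
    exact sin_sq_not_const (2 * Real.pi * N * Λ) _ _ α β hαβ hNΛ hc
  -- bounds relative to floor
  have hxq_bounds : ∀ x ∈ Set.Ioo l u,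
      (⌊x * q⌋ : ℝ) + q / (2 * Λ) ≤ x * q ∧ x * q ≤ (⌊x * q⌋ : ℝ) + 1 - q / (2 * Λ) := by
    intro x hx
    have h1 := hfar x hx ⌊x * q⌋
    have h2 := hfar x hx (⌊x * q⌋ + 1)
    have hfl : (⌊x * q⌋ : ℝ) ≤ x * q := Int.floor_le _
    have hfu : x * q < ⌊x * q⌋ + 1 := Int.lt_floor_add_one _
    push_cast at h2
    constructor
    · rw [abs_of_nonneg (by linarith)] at h1; linarith
    · rw [abs_of_nonpos (by linarith)] at h2; linarith
  -- floor is constant on (l,u)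
  have hfloor : ∀ x ∈ Set.Ioo l u, ∀ y ∈ Set.Ioo l u, x ≤ y → ⌊x * q⌋ = ⌊y * q⌋ := by
    intro x hx y hy hxy
    by_contra hne
    have hle : ⌊x * q⌋ ≤ ⌊y * q⌋ :=
      Int.floor_le_floor (mul_le_mul_of_nonneg_right hxy hq0.le)
    have hlt : ⌊x * q⌋ < ⌊y * q⌋ := lt_of_le_of_ne hle hne
    have hcont : ContinuousOn (fun z : ℝ => z * q) (Set.Icc x y) :=
      (continuous_id.mul continuous_const).continuousOn
    have hmem : ((⌊y * q⌋ : ℝ)) ∈ Set.Icc (x * q) (y * q) := by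
      constructor
      · have hb := (hxq_bounds x hx).2
        have hstep : (⌊x * q⌋ : ℝ) + 1 ≤ ⌊y * q⌋ := by exact_mod_cast hlt
        linarith
      · exact Int.floor_le _
    obtain ⟨z, hz, hzq⟩ := intermediate_value_Icc hxy hcont hmem
    have hzU : z ∈ Set.Ioo l u := ⟨lt_of_lt_of_le hx.1 hz.1, lt_of_le_of_lt hz.2 hy.2⟩
    have hz2 := hfar z hzU ⌊y * q⌋
    have hzq' : z * q = (⌊y * q⌋ : ℝ) := hzq
    rw [hzq', sub_self, abs_zero] at hz2
    linarith
  set xm := (l + u) / 2 with hxm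
  have hxmm : xm ∈ Set.Ioo l u := ⟨by simp only [hxm]; linarith, by simp only [hxm]; linarith⟩
  set m := ⌊xm * q⌋ with hm
  have hbd : ∀ x ∈ Set.Ioo l u,
      (m : ℝ) + q / (2 * Λ) ≤ x * q ∧ x * q ≤ (m : ℝ) + 1 - q / (2 * Λ) := by
    intro x hx
    have hmx : ⌊x * q⌋ = m := by
      rcases le_total x xm with hc | hc
      · exact hfloor x hx xm hxmm hc
      · exact (hfloor xm hxmm x hx hc).symm
    have := hxq_bounds x hx
    rw [hmx] at this
    exact this
  have hxm01 : 0 < xm ∧ xm < 1 / 2 := ⟨(hsub hxmm).1, (hsub hxmm).2⟩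
  have hbm := hbd xm hxmm
  have hm0 : 0 ≤ m := by
    have h5 : (-1 : ℝ) < (m : ℝ) := by nlinarith [hbm.2, hxm01.1, hh0]
    have : (-1 : ℤ) < m := by exact_mod_cast h5
    omega
  have hmU : (m : ℝ) < ((q : ℝ) + 1) / 2 := by
    have h6 : xm * q < q / 2 := by nlinarith [hxm01.2]
    nlinarith [hbm.1, hh0]
  constructor
  · refine ⟨m, hm0, hmU, ?_⟩
    intro x hx
    obtain ⟨hb1, hb2⟩ := hbd x hx
    constructor
    · rw [heqlo m]
      exact (div_le_iff₀ hq0).mpr hb1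
    · rw [heqhi m]
      exact (le_div_iff₀ hq0).mpr hb2
  · intro x hx
    exact vanish N q Λ a hΛ0 hq m x (hbd x hx).1 (hbd x hx).2
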